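/- Let e be a nonzero idempotent of an admissible Poisson algebra P, and let P_{0,0} = {x : e·x = x·e = 0} and P_{1,1} = {x : e·x = x·e = x}. Then P_{0,0} and P_{1,1} are closed under the multiplication ·, i.e., they are subalgebras of P. -/
import Mathlib


variable {K : Type*} [Field K] {P : Type*} [AddCommGroup P] [Module K P]

/-- The associator of a bilinear multiplication. -/
def assocOf (m : P →ₗ[K] P →ₗ[K] P) (X Y Z : P) : P := m (m X Y) Z - m X (m Y Z)

/-- Admissible Poisson algebra condition:
`3 A(X,Y,Z) = (X·Z)·Y + (Y·Z)·X - (Y·X)·Z - (Z·X)·Y`. -/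
def IsAdmissible (m : P →ₗ[K] P →ₗ[K] P) : Prop :=
  ∀ X Y Z : P, (3 : ℤ) • assocOf m X Y Z =
    m (m X Z) Y + m (m Y Z) X - m (m Y X) Z - m (m Z X) Y

/-- The antisymmetrized bracket `{X,Y} = (X·Y - Y·X)/2`. -/
def brOf (m : P →ₗ[K] P →ₗ[K] P) (X Y : P) : P := (2 : K)⁻¹ • (m X Y - m Y X)

/-- The symmetrized product `X∙Y = (X·Y + Y·X)/2`. -/
def bulOf (m : P →ₗ[K] P →ₗ[K] P) (X Y : P) : P := (2 : K)⁻¹ • (m X Y + m Y X)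

/-- for a nonzero idempotent `e` of an admissible Poisson algebra,
the Pierce components `P₀₀ = {x : e·x = x·e = 0}` and `P₁₁ = {x : e·x = x·e = x}`
are closed under the multiplication. -/
theorem stmt9 (h2 : (2 : K) ≠ 0) (h3 : (3 : K) ≠ 0)
    (m : P →ₗ[K] P →ₗ[K] P) (hm : IsAdmissible m)
    (e : P) (he0 : e ≠ 0) (he : m e e = e) :
    (∀ x y : P, m e x = 0 → m x e = 0 → m e y = 0 → m y e = 0 →
      m e (m x y) = 0 ∧ m (m x y) e = 0) ∧
    (∀ x y : P, m e x = x → m x e = x → m e y = y → m y e = y →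
      m e (m x y) = m x y ∧ m (m x y) e = m x y) := by
  have h8 : (8 : K) ≠ 0 := by
    have : (8 : K) = 2 * 2 * 2 := by norm_num
    rw [this]; exact mul_ne_zero (mul_ne_zero h2 h2) h2
  constructor
  · intro x y hex hxe hey hye
    have H1 := hm x y e
    have H2 := hm y x e
    have H3 := hm e x y
    simp only [assocOf, hex, hxe, hey, hye, map_zero, LinearMap.zero_apply, he,
      zero_sub, sub_zero, add_zero, zero_add, sub_neg_eq_add, smul_sub] at H1 H2 H3
    rw [← Int.cast_smul_eq_zsmul K] at H1 H2 H3
    push_cast at H1 H2 H3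
    have hB : m (m x y) e = 0 := by
      have h9 : (9 : K) • m (m x y) e = m (m x y) e := by
        linear_combination (norm := module) (3:K) • H1 - H2
      have : (8 : K) • m (m x y) e = 0 := by
        linear_combination (norm := module) h9
      exact (smul_eq_zero.mp this).resolve_left h8
    have hA : m e (m x y) = 0 := by
      have : (3 : K) • m e (m x y) = 0 := by
        linear_combination (norm := module) -H3 - hB
      exact (smul_eq_zero.mp this).resolve_left h3
    exact ⟨hA, hB⟩
  · intro x y hex hxe hey hye
    have H1 := hm x y e
    have H2 := hm y x e
    have H3 := hm e x y
    simp only [assocOf, hex, hxe, hey, hye, he, smul_sub] at H1 H2 H3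
    rw [← Int.cast_smul_eq_zsmul K] at H1 H2 H3
    push_cast at H1 H2 H3
    have hB : m (m x y) e = m x y := by
      have : (8 : K) • (m (m x y) e - m x y) = 0 := by
        linear_combination (norm := module) (3:K) • H1 - H2
      have := (smul_eq_zero.mp this).resolve_left h8
      exact sub_eq_zero.mp this
    have hA : m e (m x y) = m x y := by
      have : (3 : K) • (m e (m x y) - m x y) = 0 := by
        linear_combination (norm := module) -H3 - hB
      have := (smul_eq_zero.mp this).resolve_left h3
      exact sub_eq_zero.mp this
    exact ⟨hA, hB⟩
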